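/- arXiv:1603.02378 — 4 statements merged into one kernel-verified Lean document; each statement's English description precedes it below -/
import Mathlib

section
/- Let Cap a > 0 for every arc a ∈ A. Let Aᵏ be a simple cut-set and let Aˡ be any cut-set with Aˡ ≠ Aᵏ. Then there exists a function y : A → ℝ taking only the values 0 and 1 such that Σ_{a ∈ Aᵏ} Cap a · y a < Σ_{a ∈ Aˡ} Cap a · y a. Consequently the Benders cut generated by Aᵏ is not dominated by the Benders cut generated by Aˡ; since Aˡ was arbitrary, the Benders cut generated by a simple cut-set is Pareto-optimal. -/
open Finset

/-- The arcs traversed by a path given as a list of vertices. -/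
def pathArcs {V : Type*} (p : List V) : List (V × V) := p.zip p.tail

/-- `p` is a directed path from `s` to `t` in the network with arc set `A`. -/
def IsPath {V : Type*} (A : Finset (V × V)) (s t : V) (p : List V) : Prop :=
  p.head? = some s ∧ p.getLast? = some t ∧ ∀ a ∈ pathArcs p, a ∈ A

/-- `S` is a cut-set: every directed path from `s` to `t` contains an arc of `S`. -/
def IsCutSet {V : Type*} (A : Finset (V × V)) (s t : V) (S : Finset (V × V)) : Prop :=
  S ⊆ A ∧ ∀ p : List V, IsPath A s t p → ∃ a ∈ S, a ∈ pathArcs p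

/-- A simple cut-set: removing any arc destroys the cut-set property. -/
def IsSimpleCutSet {V : Type*} [DecidableEq V] (A : Finset (V × V)) (s t : V)
    (S : Finset (V × V)) : Prop :=
  IsCutSet A s t S ∧ ∀ a ∈ S, ¬ IsCutSet A s t (S.erase a)

/-- `y` takes only the values 0 and 1. -/
def IsBinary {V : Type*} (y : V × V → ℝ) : Prop := ∀ a, y a = 0 ∨ y a = 1

/-- The Benders cut generated by `S'` dominates the one generated by `S`. -/
def Dominates {V : Type*} (Cap : V × V → ℝ) (S' S : Finset (V × V)) : Prop :=
  (∀ y : V × V → ℝ, IsBinary y → ∑ a ∈ S', Cap a * y a ≤ ∑ a ∈ S, Cap a * y a) ∧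
  ∃ y : V × V → ℝ, IsBinary y ∧ ∑ a ∈ S', Cap a * y a < ∑ a ∈ S, Cap a * y a

/-- The Benders cut generated by the cut-set `S` is Pareto-optimal. -/
def BendersParetoOptimal {V : Type*} (A : Finset (V × V)) (s t : V) (Cap : V × V → ℝ)
    (S : Finset (V × V)) : Prop :=
  ∀ S' : Finset (V × V), IsCutSet A s t S' → S' ≠ S → ¬ Dominates Cap S' S


/-- Key lemma: any cut-set other than a simple cut-set `Ak` contains an arc outside `Ak`. -/
lemma exists_arc_not_mem {V : Type*} [DecidableEq V] (A : Finset (V × V)) (s t : V)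
    (Ak Al : Finset (V × V)) (hAk : IsSimpleCutSet A s t Ak) (hAl : IsCutSet A s t Al)
    (hne : Al ≠ Ak) : ∃ a, a ∈ Al ∧ a ∉ Ak := by
  by_contra h
  push_neg at h
  have hsub : Al ⊆ Ak := fun a ha => h a ha
  have hss : Al ⊂ Ak := lt_of_le_of_ne hsub hne
  obtain ⟨a, haAk, haAl⟩ := Finset.exists_of_ssubset hss
  refine hAk.2 a haAk ⟨(Finset.erase_subset a Ak).trans hAk.1.1, fun p hp => ?_⟩
  obtain ⟨b, hbAl, hbp⟩ := hAl.2 p hp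
  exact ⟨b, Finset.mem_erase.mpr ⟨fun hba => haAl (hba ▸ hbAl), hsub hbAl⟩, hbp⟩

lemma exists_binary_lt {V : Type*} [DecidableEq V] (A : Finset (V × V)) (s t : V)
    (Cap : V × V → ℝ) (hCap : ∀ a ∈ A, 0 < Cap a)
    (Ak Al : Finset (V × V)) (hAk : IsSimpleCutSet A s t Ak) (hAl : IsCutSet A s t Al)
    (hne : Al ≠ Ak) :
    ∃ y : V × V → ℝ, IsBinary y ∧ ∑ a ∈ Ak, Cap a * y a < ∑ a ∈ Al, Cap a * y a := by
  obtain ⟨a, haAl, haAk⟩ := exists_arc_not_mem A s t Ak Al hAk hAl hne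
  refine ⟨fun b => if b = a then 1 else 0, fun b => by by_cases hb : b = a <;> simp [hb], ?_⟩
  have h1 : ∑ b ∈ Ak, Cap b * (if b = a then 1 else 0) = 0 := by
    apply Finset.sum_eq_zero
    intro b hb
    have : b ≠ a := fun hba => haAk (hba ▸ hb)
    simp [this]
  have h2 : ∑ b ∈ Al, Cap b * (if b = a then 1 else 0) = Cap a := by
    rw [Finset.sum_eq_single a]
    · simp
    · intro b _ hb; simp [hb]
    · intro h; exact absurd haAl h
  rw [h1, h2]
  exact hCap a (hAl.1 haAl)

/-- The Benders cut generated by a simple cut-set `Ak` is not dominated by the Benders cut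
generated by any other cut-set `Al`; hence it is Pareto-optimal. -/
theorem stmt_0 {V : Type*} [Fintype V] [DecidableEq V] (A : Finset (V × V)) (s t : V)
    (hst : s ≠ t) (Cap : V × V → ℝ) (hCap : ∀ a ∈ A, 0 < Cap a)
    (Ak Al : Finset (V × V)) (hAk : IsSimpleCutSet A s t Ak) (hAl : IsCutSet A s t Al)
    (hne : Al ≠ Ak) :
    (∃ y : V × V → ℝ, IsBinary y ∧
      ∑ a ∈ Ak, Cap a * y a < ∑ a ∈ Al, Cap a * y a) ∧
    ¬ Dominates Cap Al Ak ∧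
    BendersParetoOptimal A s t Cap Ak := by
  obtain ⟨y, hy, hlt⟩ := exists_binary_lt A s t Cap hCap Ak Al hAk hAl hne
  refine ⟨⟨y, hy, hlt⟩, fun hd => absurd (hd.1 y hy) (not_le.mpr hlt), ?_⟩
  intro S' hS' hS'ne hd
  obtain ⟨y', hy', hlt'⟩ := exists_binary_lt A s t Cap hCap Ak S' hAk hS' hS'ne
  exact absurd (hd.1 y' hy') (not_le.mpr hlt')
end

section
/- Suppose Cap a ≥ 0 for every arc a ∈ A. Then there exist a flow x* feasible for Cap and a simple cut-set S* such that: the value of x* equals Σ_{a ∈ S*} Cap a; every flow x feasible for Cap has value at most the value of x*; and Σ_{a ∈ S*} Cap a ≤ Σ_{a ∈ S} Cap a for every simple cut-set S. That is, the maximum possible flow from the source to the sink equals the minimum value among all simple cut-sets. -/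
open Finset

/-- `x` is a flow feasible for the capacity function `c`. -/
def IsFeasibleFlow {V : Type*} [DecidableEq V] (A : Finset (V × V)) (s t : V)
    (c x : V × V → ℝ) : Prop :=
  (∀ a ∈ A, 0 ≤ x a ∧ x a ≤ c a) ∧
  ∀ v : V, v ≠ s → v ≠ t →
    ∑ a ∈ A.filter (fun a => a.2 = v), x a = ∑ a ∈ A.filter (fun a => a.1 = v), x a

/-- The value of a flow: net flow out of the source `s`. -/
def flowValue {V : Type*} [DecidableEq V] (A : Finset (V × V)) (s : V)
    (x : V × V → ℝ) : ℝ :=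
  ∑ a ∈ A.filter (fun a => a.1 = s), x a - ∑ a ∈ A.filter (fun a => a.2 = s), x a

namespace MFMC
variable {V : Type*}

lemma listSum_le_length (l : List α) (g : α → ℝ) (h : ∀ b ∈ l, g b ≤ 1) :
    (l.map g).sum ≤ l.length := by
  induction l with
  | nil => simp
  | cons a l ih =>
    simp only [List.map_cons, List.sum_cons, List.length_cons]
    push_cast
    have h1 := h a (by simp)
    have h2 := ih (fun b hb => h b (by simp [hb]))
    linarith

lemma listSum_ge_neg_length (l : List α) (g : α → ℝ) (h : ∀ b ∈ l, -1 ≤ g b) :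
    -(l.length : ℝ) ≤ (l.map g).sum := by
  induction l with
  | nil => simp
  | cons a l ih =>
    simp only [List.map_cons, List.sum_cons, List.length_cons]
    push_cast
    have h1 := h a (by simp)
    have h2 := ih (fun b hb => h b (by simp [hb]))
    linarith

lemma listSum_nonpos (l : List α) (g : α → ℝ) (h : ∀ b ∈ l, g b ≤ 0) :
    (l.map g).sum ≤ 0 := by
  induction l with
  | nil => simp
  | cons a l ih =>
    simp only [List.map_cons, List.sum_cons]
    have h1 := h a (by simp)
    have h2 := ih (fun b hb => h b (by simp [hb]))
    linarith

lemma listSum_nonneg (l : List α) (g : α → ℝ) (h : ∀ b ∈ l, 0 ≤ g b) :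
    0 ≤ (l.map g).sum := by
  induction l with
  | nil => simp
  | cons a l ih =>
    simp only [List.map_cons, List.sum_cons]
    have h1 := h a (by simp)
    have h2 := ih (fun b hb => h b (by simp [hb]))
    linarith

lemma listSum_sub (l : List α) (g h : α → ℝ) :
    (l.map g).sum - (l.map h).sum = (l.map (fun b => g b - h b)).sum := by
  induction l with
  | nil => simp
  | cons a l ih => simp only [List.map_cons, List.sum_cons]; linarith

lemma sum_listSum (T : Finset β) (l : List α) (g : β → α → ℝ) :
    ∑ b ∈ T, (l.map (g b)).sum = (l.map (fun a => ∑ b ∈ T, g b a)).sum := by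
  induction l with
  | nil => simp
  | cons a l ih => simp [Finset.sum_add_distrib, ih]

lemma telescope (g : V → ℝ) : ∀ (l : List V) (a : V),
    (((a :: l).zip l).map (fun st => g st.2 - g st.1)).sum
      = g ((a :: l).getLast (by simp)) - g a := by
  intro l
  induction l with
  | nil => intro a; simp
  | cons b l ih =>
    intro a
    rw [List.zip_cons_cons, List.map_cons, List.sum_cons, ih b]
    have hgl : (a :: b :: l).getLast (by simp) = (b :: l).getLast (by simp) :=
      List.getLast_cons (by simp)
    rw [hgl]
    ring

lemma chain_zip {r : V → V → Prop} : ∀ {l : List V} {a : V}, List.Chain r a l →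
    ∀ st ∈ (a :: l).zip l, r st.1 st.2 := by
  intro l
  induction l with
  | nil => simp
  | cons b l ih =>
    intro a h st hst
    rw [List.zip_cons_cons, List.mem_cons] at hst
    rcases hst with rfl | hst
    · exact (List.chain_cons.1 h).1
    · exact ih (List.chain_cons.1 h).2 st hst

lemma pathArcs_cons_cons (a b : V) (q : List V) :
    pathArcs (a :: b :: q) = (a, b) :: pathArcs (b :: q) := rfl

lemma crossing (P : V → Prop) [DecidablePred P] :
    ∀ (p : List V) (s' t' : V), P s' → ¬ P t' → p.head? = some s' →
      p.getLast? = some t' → ∃ st ∈ pathArcs p, P st.1 ∧ ¬ P st.2 := by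
  intro p
  induction p with
  | nil => intro s' t' _ _ h; simp at h
  | cons a q ih =>
    intro s' t' hs ht hh hl
    simp only [List.head?_cons, Option.some_inj] at hh
    subst hh
    cases q with
    | nil =>
      simp only [List.getLast?_singleton, Option.some_inj] at hl
      subst hl; exact absurd hs ht
    | cons b q' =>
      by_cases hb : P b
      · obtain ⟨st, h1, h2⟩ := ih b t' hb ht rfl (by rw [← hl, List.getLast?_cons_cons])
        exact ⟨st, by rw [pathArcs_cons_cons]; exact List.mem_cons_of_mem _ h1, h2⟩
      · exact ⟨(a, b), by rw [pathArcs_cons_cons]; exact List.mem_cons_self, hs, hb⟩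

lemma cutval [DecidableEq V] (A : Finset (V × V)) (s t : V) (x : V × V → ℝ)
    (hx : ∀ v : V, v ≠ s → v ≠ t →
      ∑ a ∈ A.filter (fun a => a.2 = v), x a = ∑ a ∈ A.filter (fun a => a.1 = v), x a)
    (R : Finset V) (hs : s ∈ R) (ht : t ∉ R) :
    flowValue A s x = ∑ a ∈ A.filter (fun a => a.1 ∈ R ∧ a.2 ∉ R), x a
      - ∑ a ∈ A.filter (fun a => a.1 ∉ R ∧ a.2 ∈ R), x a := by
  classical
  have fiber1 : ∑ v ∈ R, ∑ a ∈ A.filter (fun a => a.1 = v), x a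
      = ∑ a ∈ A.filter (fun a => a.1 ∈ R), x a := by
    simp only [Finset.sum_filter]
    rw [Finset.sum_comm]
    exact Finset.sum_congr rfl fun a _ => Finset.sum_ite_eq R a.1 (fun _ => x a)
  have fiber2 : ∑ v ∈ R, ∑ a ∈ A.filter (fun a => a.2 = v), x a
      = ∑ a ∈ A.filter (fun a => a.2 ∈ R), x a := by
    simp only [Finset.sum_filter]
    rw [Finset.sum_comm]
    exact Finset.sum_congr rfl fun a _ => Finset.sum_ite_eq R a.2 (fun _ => x a)
  have key : ∑ v ∈ R, (∑ a ∈ A.filter (fun a => a.1 = v), x a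
      - ∑ a ∈ A.filter (fun a => a.2 = v), x a) = flowValue A s x := by
    rw [Finset.sum_eq_single s]
    · rfl
    · intro v hv hvs
      have hvt : v ≠ t := fun h => ht (h ▸ hv)
      rw [hx v hvs hvt]; ring
    · intro h; exact absurd hs h
  have splitA : ∑ a ∈ A.filter (fun a => a.1 ∈ R), x a
      = ∑ a ∈ A.filter (fun a => a.1 ∈ R ∧ a.2 ∈ R), x a
        + ∑ a ∈ A.filter (fun a => a.1 ∈ R ∧ a.2 ∉ R), x a := by
    rw [← Finset.sum_filter_add_sum_filter_not (A.filter (fun a => a.1 ∈ R))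
      (fun a => a.2 ∈ R), Finset.filter_filter, Finset.filter_filter]
  have splitB : ∑ a ∈ A.filter (fun a => a.2 ∈ R), x a
      = ∑ a ∈ A.filter (fun a => a.1 ∈ R ∧ a.2 ∈ R), x a
        + ∑ a ∈ A.filter (fun a => a.1 ∉ R ∧ a.2 ∈ R), x a := by
    rw [← Finset.sum_filter_add_sum_filter_not (A.filter (fun a => a.2 ∈ R))
      (fun a => a.1 ∈ R), Finset.filter_filter, Finset.filter_filter]
    congr 2 <;> · ext a; simp; tauto
  rw [Finset.sum_sub_distrib, fiber1, fiber2] at key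
  rw [← key, splitA, splitB]
  ring

lemma weak [Fintype V] [DecidableEq V] (A : Finset (V × V)) (s t : V)
    (Cap : V × V → ℝ) (hCap : ∀ a ∈ A, 0 ≤ Cap a) (x : V × V → ℝ)
    (hx : IsFeasibleFlow A s t Cap x) (S : Finset (V × V)) (hS : IsCutSet A s t S) :
    flowValue A s x ≤ ∑ a ∈ S, Cap a := by
  classical
  set rel : V → V → Prop := fun u v => (u, v) ∈ A ∧ (u, v) ∉ S with hrel
  set R : Finset V := Finset.univ.filter (fun v => Relation.ReflTransGen rel s v) with hR
  have hsR : s ∈ R := by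
    simp only [hR, Finset.mem_filter, Finset.mem_univ, true_and]
    exact Relation.ReflTransGen.refl
  have htR : t ∉ R := by
    simp only [hR, Finset.mem_filter, Finset.mem_univ, true_and]
    intro hr
    obtain ⟨l, hc, hl⟩ := List.exists_isChain_cons_of_relationReflTransGen hr
    have harcs : ∀ st ∈ pathArcs (s :: l), rel st.1 st.2 := chain_zip hc
    have hpath : IsPath A s t (s :: l) := by
      refine ⟨rfl, ?_, fun a ha => ?_⟩
      · rw [List.getLast?_eq_getLast (l := s :: l) (by simp)]; exact congrArg some hl
      · have := (harcs a ha).1; simpa using this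
    obtain ⟨a, haS, hap⟩ := hS.2 _ hpath
    have := (harcs a hap).2
    simp only [Prod.mk.eta] at this
    exact this haS
  have hsub : A.filter (fun a => a.1 ∈ R ∧ a.2 ∉ R) ⊆ S := by
    intro a ha
    simp only [Finset.mem_filter] at ha
    obtain ⟨haA, h1, h2⟩ := ha
    by_contra haS
    apply h2
    simp only [hR, Finset.mem_filter, Finset.mem_univ, true_and] at h1 ⊢
    refine h1.tail ?_
    show (a.1, a.2) ∈ A ∧ (a.1, a.2) ∉ S
    simpa using ⟨haA, haS⟩
  have hcv := cutval A s t x hx.2 R hsR htR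
  have h1 : ∑ a ∈ A.filter (fun a => a.1 ∉ R ∧ a.2 ∈ R), x a ≥ 0 :=
    Finset.sum_nonneg fun a ha => (hx.1 a (Finset.mem_filter.1 ha).1).1
  have h2 : ∑ a ∈ A.filter (fun a => a.1 ∈ R ∧ a.2 ∉ R), x a
      ≤ ∑ a ∈ A.filter (fun a => a.1 ∈ R ∧ a.2 ∉ R), Cap a :=
    Finset.sum_le_sum fun a ha => (hx.1 a (Finset.mem_filter.1 ha).1).2
  have h3 : ∑ a ∈ A.filter (fun a => a.1 ∈ R ∧ a.2 ∉ R), Cap a ≤ ∑ a ∈ S, Cap a :=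
    Finset.sum_le_sum_of_subset_of_nonneg hsub
      (fun a haS _ => hCap a (hS.1 haS))
  linarith

lemma exists_simple_subset [DecidableEq V] {A : Finset (V × V)} {s t : V} :
    ∀ S : Finset (V × V), IsCutSet A s t S → ∃ S' ⊆ S, IsSimpleCutSet A s t S' := by
  intro S
  induction S using Finset.strongInductionOn with
  | _ S ih =>
    intro hS
    by_cases h : IsSimpleCutSet A s t S
    · exact ⟨S, subset_rfl, h⟩
    · have hex : ∃ a ∈ S, IsCutSet A s t (S.erase a) := by
        by_contra hc; push_neg at hc; exact h ⟨hS, hc⟩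
      obtain ⟨a, haS, hcut'⟩ := hex
      obtain ⟨S', hsub, hsim⟩ := ih _ (Finset.erase_ssubset haS) hcut'
      exact ⟨S', hsub.trans (Finset.erase_subset _ _), hsim⟩

lemma augment [DecidableEq V] (A : Finset (V × V)) (s t : V) (hst : s ≠ t)
    (Cap x : V × V → ℝ) (hx : IsFeasibleFlow A s t Cap x)
    (hx0 : ∀ a, a ∉ A → x a = 0)
    (hr : Relation.ReflTransGen
      (fun u v => ((u, v) ∈ A ∧ x (u, v) < Cap (u, v)) ∨ ((v, u) ∈ A ∧ 0 < x (v, u))) s t) :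
    ∃ x' : V × V → ℝ, (IsFeasibleFlow A s t Cap x' ∧ ∀ a, a ∉ A → x' a = 0) ∧
      flowValue A s x < flowValue A s x' := by
  classical
  obtain ⟨l, hc, hl⟩ := List.exists_isChain_cons_of_relationReflTransGen hr
  have hlne : l ≠ [] := by
    rintro rfl; simp at hl; exact hst hl
  set steps : List (V × V) := (s :: l).zip l with hstepsdef
  have hres : ∀ st ∈ steps, (st ∈ A ∧ x st < Cap st) ∨ (st.swap ∈ A ∧ 0 < x st.swap) := by
    intro st h
    have := chain_zip hc st h
    rcases st with ⟨c, d⟩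
    simpa using this
  have hstne : steps ≠ [] := by
    rcases l with _ | ⟨b, l'⟩
    · exact absurd rfl hlne
    · simp [hstepsdef]
  have hn : 0 < steps.length := List.length_pos_iff.2 hstne
  set F : V × V → Prop := fun st => st ∈ A ∧ x st < Cap st with hF
  set sign : V × V → ℝ := fun st => if F st then 1 else -1 with hsign
  set u : V × V → V × V := fun st => if F st then st else st.swap with hu
  set slack : V × V → ℝ := fun st => if F st then Cap st - x st else x st.swap with hslackdef
  have huA : ∀ st ∈ steps, u st ∈ A := by
    intro st h
    by_cases hFst : F st
    · simp only [hu, if_pos hFst]; exact hFst.1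
    · rcases hres st h with h1 | h2
      · exact absurd h1 hFst
      · simp only [hu, if_neg hFst]; exact h2.1
  have hslack : ∀ st ∈ steps, 0 < slack st := by
    intro st h
    by_cases hFst : F st
    · simp only [hslackdef, if_pos hFst]; linarith [hFst.2]
    · rcases hres st h with h1 | h2
      · exact absurd h1 hFst
      · simp only [hslackdef, if_neg hFst]; exact h2.2
  have hT : steps.toFinset.Nonempty := by
    rcases List.exists_mem_of_ne_nil steps hstne with ⟨st, hmem⟩
    exact ⟨st, List.mem_toFinset.2 hmem⟩
  set m : ℝ := steps.toFinset.inf' hT slack with hm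
  have hm0 : 0 < m :=
    (Finset.lt_inf'_iff hT).2 fun st hst' => hslack st (List.mem_toFinset.1 hst')
  have hmle : ∀ st ∈ steps, m ≤ slack st :=
    fun st h => Finset.inf'_le _ (List.mem_toFinset.2 h)
  set ε : ℝ := m / steps.length with hε
  have hε0 : 0 < ε := div_pos hm0 (by exact_mod_cast hn)
  have hεlen : ε * steps.length = m := by
    rw [hε]; exact div_mul_cancel₀ m (by exact_mod_cast hn.ne')
  set f : V × V → ℝ :=
    fun a => (steps.map (fun st => if u st = a then sign st else 0)).sum with hf
  set x' : V × V → ℝ := fun a => x a + ε * f a with hx'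
  have hsign_le : ∀ st, sign st ≤ 1 := by
    intro st; simp only [hsign]; split <;> norm_num
  have hsign_ge : ∀ st, -1 ≤ sign st := by
    intro st; simp only [hsign]; split <;> norm_num
  have hfle : ∀ a, f a ≤ steps.length := by
    intro a
    refine listSum_le_length _ _ fun st _ => ?_
    split
    · exact hsign_le st
    · norm_num
  have hfge : ∀ a, -(steps.length : ℝ) ≤ f a := by
    intro a
    refine listSum_ge_neg_length _ _ fun st _ => ?_
    split
    · exact hsign_ge st
    · norm_num
  have hfpos : ∀ a, 0 < f a → ∃ st ∈ steps, u st = a ∧ F st := by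
    intro a hfa
    by_contra hcon
    push_neg at hcon
    have : f a ≤ 0 := by
      refine listSum_nonpos _ _ fun st hs' => ?_
      by_cases he : u st = a
      · rw [if_pos he]
        have := hcon st hs' he
        simp only [hsign, if_neg this]; norm_num
      · rw [if_neg he]
    linarith
  have hfneg : ∀ a, f a < 0 → ∃ st ∈ steps, u st = a ∧ ¬ F st := by
    intro a hfa
    by_contra hcon
    push_neg at hcon
    have : 0 ≤ f a := by
      refine listSum_nonneg _ _ fun st hs' => ?_
      by_cases he : u st = a
      · rw [if_pos he]
        have := hcon st hs' he
        simp only [hsign, if_pos this]; norm_num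
      · rw [if_neg he]
    linarith
  have hf0 : ∀ a, a ∉ A → f a = 0 := by
    intro a ha
    refine List.sum_eq_zero fun y hy => ?_
    obtain ⟨st, hst', rfl⟩ := List.mem_map.1 hy
    rw [if_neg]
    intro he
    exact ha (he ▸ huA st hst')
  -- feasibility bounds
  have hbounds : ∀ a ∈ A, 0 ≤ x' a ∧ x' a ≤ Cap a := by
    intro a ha
    obtain ⟨hx1, hx2⟩ := hx.1 a ha
    rcases lt_trichotomy (f a) 0 with hfa | hfa | hfa
    · obtain ⟨st, hsts, hust, hFst⟩ := hfneg a hfa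
      have hsl : slack st = x a := by
        rw [hslackdef]
        simp only [if_neg hFst]
        rw [hu] at hust
        simp only [if_neg hFst] at hust
        rw [hust]
      have hmx : m ≤ x a := hsl ▸ hmle st hsts
      have h1 : ε * f a ≥ ε * (-(steps.length : ℝ)) :=
        mul_le_mul_of_nonneg_left (hfge a) hε0.le
      have h2 : ε * f a ≤ 0 := mul_nonpos_of_nonneg_of_nonpos hε0.le hfa.le
      constructor
      · simp only [hx']
        nlinarith [hεlen]
      · simp only [hx']; linarith
    · simp only [hx', hfa]
      constructor <;> · simp; linarith
    · obtain ⟨st, hsts, hust, hFst⟩ := hfpos a hfa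
      have hsl : slack st = Cap a - x a := by
        rw [hslackdef]
        simp only [if_pos hFst]
        rw [hu] at hust
        simp only [if_pos hFst] at hust
        rw [hust]
      have hmx : m ≤ Cap a - x a := hsl ▸ hmle st hsts
      have h1 : ε * f a ≤ ε * (steps.length : ℝ) :=
        mul_le_mul_of_nonneg_left (hfle a) hε0.le
      have h2 : 0 ≤ ε * f a := mul_nonneg hε0.le hfa.le
      constructor
      · simp only [hx']; linarith
      · simp only [hx']
        nlinarith [hεlen]
  -- sum of f over a filtered set
  have hsumf : ∀ (P : V × V → Prop) (_ : DecidablePred P),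
      ∑ a ∈ A.filter P, f a
        = (steps.map (fun st => if P (u st) then sign st else 0)).sum := by
    intro P hP
    simp only [hf]
    rw [sum_listSum]
    refine congrArg List.sum (List.map_congr_left fun st hst' => ?_)
    rw [Finset.sum_ite_eq]
    simp [Finset.mem_filter, huA st hst']
  -- the key telescoping identity
  have hdiff : ∀ v : V,
      ∑ a ∈ A.filter (fun a => a.2 = v), f a - ∑ a ∈ A.filter (fun a => a.1 = v), f a
        = (if t = v then (1:ℝ) else 0) - (if s = v then (1:ℝ) else 0) := by
    intro v
    have e1 := hsumf (fun a => a.2 = v) inferInstance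
    have e2 := hsumf (fun a => a.1 = v) inferInstance
    simp only [e1, e2, listSum_sub]
    have hcongr : (steps.map (fun st =>
        (if (u st).2 = v then sign st else 0) - (if (u st).1 = v then sign st else 0)))
        = steps.map (fun st =>
          (fun w => if w = v then (1:ℝ) else 0) st.2 - (fun w => if w = v then (1:ℝ) else 0) st.1) := by
      refine List.map_congr_left fun st _ => ?_
      by_cases hFst : F st
      · simp only [hu, hsign, if_pos hFst]
      · simp only [hu, hsign, if_neg hFst]
        rcases st with ⟨c, d⟩
        simp only [Prod.swap_prod_mk]
        by_cases h1 : c = v <;> by_cases h2 : d = v <;> simp [h1, h2]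
    rw [hcongr, hstepsdef]
    have htel := telescope (fun w => if w = v then (1:ℝ) else 0) l s
    rw [htel]
    have : (s :: l).getLast (by simp) = t := hl
    rw [this]
  -- conservation
  have hcons : ∀ v : V, v ≠ s → v ≠ t →
      ∑ a ∈ A.filter (fun a => a.2 = v), x' a = ∑ a ∈ A.filter (fun a => a.1 = v), x' a := by
    intro v hvs hvt
    have hold := hx.2 v hvs hvt
    have hd := hdiff v
    rw [if_neg (fun h => hvt h.symm), if_neg (fun h => hvs h.symm)] at hd
    simp only [hx']
    rw [Finset.sum_add_distrib, Finset.sum_add_distrib, ← Finset.mul_sum, ← Finset.mul_sum]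
    have : ∑ a ∈ A.filter (fun a => a.2 = v), f a = ∑ a ∈ A.filter (fun a => a.1 = v), f a := by
      linarith
    rw [hold, this]
  -- value increase
  have hval : flowValue A s x' = flowValue A s x + ε := by
    have hd := hdiff s
    rw [if_neg (fun h => hst h.symm), if_pos rfl] at hd
    simp only [flowValue, hx']
    rw [Finset.sum_add_distrib, Finset.sum_add_distrib, ← Finset.mul_sum, ← Finset.mul_sum]
    have : ∑ a ∈ A.filter (fun a => a.1 = s), f a
        = ∑ a ∈ A.filter (fun a => a.2 = s), f a + 1 := by linarith
    rw [this]
    ring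
  refine ⟨x', ⟨⟨hbounds, hcons⟩, fun a ha => ?_⟩, by rw [hval]; linarith⟩
  simp only [hx', hx0 a ha, hf0 a ha]
  ring

end MFMC

/-- Max-flow min-cut: the maximum possible flow from the source to the sink equals the
minimum value among all simple cut-sets. -/
theorem stmt_1 {V : Type*} [Fintype V] [DecidableEq V] (A : Finset (V × V)) (s t : V)
    (hst : s ≠ t) (Cap : V × V → ℝ) (hCap : ∀ a ∈ A, 0 ≤ Cap a) :
    ∃ (xstar : V × V → ℝ) (Sstar : Finset (V × V)),
      IsFeasibleFlow A s t Cap xstar ∧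
      IsSimpleCutSet A s t Sstar ∧
      flowValue A s xstar = ∑ a ∈ Sstar, Cap a ∧
      (∀ x : V × V → ℝ, IsFeasibleFlow A s t Cap x →
        flowValue A s x ≤ flowValue A s xstar) ∧
      (∀ S : Finset (V × V), IsSimpleCutSet A s t S →
        ∑ a ∈ Sstar, Cap a ≤ ∑ a ∈ S, Cap a) := by
  classical
  set K : Set (V × V → ℝ) :=
    {y | IsFeasibleFlow A s t Cap y ∧ ∀ a, a ∉ A → y a = 0} with hKdef
  have hKeq : K = (Set.univ.pi fun a => if a ∈ A then Set.Icc 0 (Cap a) else {(0:ℝ)}) ∩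
      {y | ∀ v : V, v ≠ s → v ≠ t →
        ∑ a ∈ A.filter (fun a => a.2 = v), y a = ∑ a ∈ A.filter (fun a => a.1 = v), y a} := by
    ext y
    constructor
    · rintro ⟨⟨hb, hc⟩, h0⟩
      refine ⟨fun a _ => ?_, hc⟩
      by_cases ha : a ∈ A
      · simp only [if_pos ha, Set.mem_Icc]; exact hb a ha
      · simp only [if_neg ha, Set.mem_singleton_iff]; exact h0 a ha
    · rintro ⟨hpi, hc⟩
      refine ⟨⟨fun a ha => ?_, hc⟩, fun a ha => ?_⟩
      · have := hpi a (Set.mem_univ a)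
        simpa only [if_pos ha, Set.mem_Icc] using this
      · have := hpi a (Set.mem_univ a)
        simpa only [if_neg ha, Set.mem_singleton_iff] using this
  have hclosed : IsClosed {y : V × V → ℝ | ∀ v : V, v ≠ s → v ≠ t →
      ∑ a ∈ A.filter (fun a => a.2 = v), y a = ∑ a ∈ A.filter (fun a => a.1 = v), y a} := by
    have heq : {y : V × V → ℝ | ∀ v : V, v ≠ s → v ≠ t →
        ∑ a ∈ A.filter (fun a => a.2 = v), y a = ∑ a ∈ A.filter (fun a => a.1 = v), y a}
        = ⋂ v : V, {y : V × V → ℝ | v ≠ s → v ≠ t →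
          ∑ a ∈ A.filter (fun a => a.2 = v), y a = ∑ a ∈ A.filter (fun a => a.1 = v), y a} := by
      ext y; simp [Set.mem_iInter]
    rw [heq]
    refine isClosed_iInter fun v => ?_
    by_cases h1 : v = s
    · simp only [h1, ne_eq, not_true_eq_false, false_implies]
      have : {y : V × V → ℝ | ¬ True → True} = Set.univ := by
        simp
      simp [isClosed_univ]
    by_cases h2 : v = t
    · have : {y : V × V → ℝ | v ≠ s → v ≠ t →
          ∑ a ∈ A.filter (fun a => a.2 = v), y a = ∑ a ∈ A.filter (fun a => a.1 = v), y a}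
          = Set.univ := by
        ext y; simp [h2]
      rw [this]; exact isClosed_univ
    · have : {y : V × V → ℝ | v ≠ s → v ≠ t →
          ∑ a ∈ A.filter (fun a => a.2 = v), y a = ∑ a ∈ A.filter (fun a => a.1 = v), y a}
          = {y : V × V → ℝ |
          ∑ a ∈ A.filter (fun a => a.2 = v), y a = ∑ a ∈ A.filter (fun a => a.1 = v), y a} := by
        ext y; simp [h1, h2]
      rw [this]
      exact isClosed_eq (continuous_finset_sum _ fun a _ => continuous_apply a)
        (continuous_finset_sum _ fun a _ => continuous_apply a)
  have hK : IsCompact K := by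
    rw [hKeq]
    refine IsCompact.inter_right ?_ hclosed
    refine isCompact_univ_pi fun a => ?_
    by_cases ha : a ∈ A
    · simp only [if_pos ha]; exact isCompact_Icc
    · simp only [if_neg ha]; exact isCompact_singleton
  have hne : K.Nonempty := by
    refine ⟨fun _ => 0, ⟨⟨fun a ha => ⟨le_refl 0, hCap a ha⟩, fun v _ _ => by simp⟩,
      fun a _ => rfl⟩⟩
  have hcont : Continuous (fun y : V × V → ℝ => flowValue A s y) := by
    exact (continuous_finset_sum _ fun a _ => continuous_apply a).sub
      (continuous_finset_sum _ fun a _ => continuous_apply a)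
  obtain ⟨xstar, hxK, hmax⟩ := hK.exists_isMaxOn hne hcont.continuousOn
  obtain ⟨hfeas, hzero⟩ := hxK
  have hmax' : ∀ y ∈ K, flowValue A s y ≤ flowValue A s xstar := fun y hy =>
    isMaxOn_iff.mp hmax y hy
  -- residual reachability
  set res : V → V → Prop := fun u v =>
    ((u, v) ∈ A ∧ xstar (u, v) < Cap (u, v)) ∨ ((v, u) ∈ A ∧ 0 < xstar (v, u)) with hres
  set R : Finset V := Finset.univ.filter (fun v => Relation.ReflTransGen res s v) with hR
  have hsR : s ∈ R := by
    simp only [hR, Finset.mem_filter, Finset.mem_univ, true_and]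
    exact Relation.ReflTransGen.refl
  have htR : t ∉ R := by
    simp only [hR, Finset.mem_filter, Finset.mem_univ, true_and]
    intro hrt
    obtain ⟨x', ⟨hx'f, hx'0⟩, hx'v⟩ :=
      MFMC.augment A s t hst Cap xstar hfeas hzero hrt
    have := hmax' x' ⟨hx'f, hx'0⟩
    linarith
  set Scut : Finset (V × V) := A.filter (fun a => a.1 ∈ R ∧ a.2 ∉ R) with hScut
  have hRmem : ∀ v, v ∈ R ↔ Relation.ReflTransGen res s v := by
    intro v; simp [hR]
  have hsat : ∀ a ∈ Scut, xstar a = Cap a := by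
    intro a ha
    simp only [hScut, Finset.mem_filter] at ha
    obtain ⟨haA, h1, h2⟩ := ha
    by_contra hne'
    have hlt : xstar a < Cap a := lt_of_le_of_ne (hfeas.1 a haA).2 hne'
    apply h2
    rw [hRmem]
    refine ((hRmem _).1 h1).tail ?_
    left
    simpa using ⟨haA, hlt⟩
  have hzero' : ∀ a ∈ A.filter (fun a => a.1 ∉ R ∧ a.2 ∈ R), xstar a = 0 := by
    intro a ha
    simp only [Finset.mem_filter] at ha
    obtain ⟨haA, h1, h2⟩ := ha
    by_contra hne'
    have hpos : 0 < xstar a := lt_of_le_of_ne (hfeas.1 a haA).1 (Ne.symm hne')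
    apply h1
    rw [hRmem]
    refine ((hRmem _).1 h2).tail ?_
    right
    simpa using ⟨haA, hpos⟩
  have hval : flowValue A s xstar = ∑ a ∈ Scut, Cap a := by
    rw [MFMC.cutval A s t xstar hfeas.2 R hsR htR]
    rw [Finset.sum_eq_zero hzero', Finset.sum_congr rfl hsat]
    ring
  have hScutcut : IsCutSet A s t Scut := by
    refine ⟨Finset.filter_subset _ _, fun p hp => ?_⟩
    obtain ⟨st, hstp, h1, h2⟩ :=
      MFMC.crossing (· ∈ R) p s t hsR htR hp.1 hp.2.1
    exact ⟨st, by simp only [hScut, Finset.mem_filter]; exact ⟨hp.2.2 st hstp, h1, h2⟩, hstp⟩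
  obtain ⟨Sstar, hsub, hsimple⟩ := MFMC.exists_simple_subset Scut hScutcut
  have hSle : ∑ a ∈ Sstar, Cap a ≤ ∑ a ∈ Scut, Cap a :=
    Finset.sum_le_sum_of_subset_of_nonneg hsub (fun a ha _ => hCap a (hScutcut.1 ha))
  have hwk : flowValue A s xstar ≤ ∑ a ∈ Sstar, Cap a :=
    MFMC.weak A s t Cap hCap xstar hfeas Sstar hsimple.1
  have heq : flowValue A s xstar = ∑ a ∈ Sstar, Cap a := le_antisymm hwk (by linarith)
  refine ⟨xstar, Sstar, hfeas, hsimple, heq, ?_, ?_⟩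
  · intro x hx
    set xA : V × V → ℝ := fun a => if a ∈ A then x a else 0 with hxA
    have hxAK : xA ∈ K := by
      refine ⟨⟨fun a ha => ?_, fun v hvs hvt => ?_⟩, fun a ha => if_neg ha⟩
      · simp only [hxA, if_pos ha]; exact hx.1 a ha
      · have := hx.2 v hvs hvt
        rw [Finset.sum_congr rfl
          (fun a ha => show xA a = x a by simp [hxA, (Finset.mem_filter.1 ha).1]),
          Finset.sum_congr rfl
          (fun a ha => show xA a = x a by simp [hxA, (Finset.mem_filter.1 ha).1])]
        exact this
    have hvals : flowValue A s xA = flowValue A s x := by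
      unfold flowValue
      rw [Finset.sum_congr rfl
          (fun a ha => show xA a = x a by simp [hxA, (Finset.mem_filter.1 ha).1]),
        Finset.sum_congr rfl
          (fun a ha => show xA a = x a by simp [hxA, (Finset.mem_filter.1 ha).1])]
    have := hmax' xA hxAK
    linarith
  · intro S hS
    have := MFMC.weak A s t Cap hCap xstar hfeas S hS.1
    linarith
end

section
/- Suppose Cap a > 0 for every arc a ∈ A. If a set S ⊆ A is not a cut-set, then there exists a flow x feasible for Cap with x a = 0 for every a ∈ S and with value strictly greater than 0. Consequently the inequality value(x) ≤ Σ_{a ∈ S} Cap a · y a fails for the configuration y that is 0 on S and 1 elsewhere, i.e. the Benders cut generated by a set that is not a cut-set is not a valid inequality. -/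
open Finset

lemma map_fst_zip_tail {V : Type*} : ∀ (l : List V), (l.zip l.tail).map Prod.fst = l.dropLast
  | [] => rfl
  | [_] => rfl
  | a :: b :: l => by
      simpa using map_fst_zip_tail (b :: l)

lemma map_snd_zip_tail {V : Type*} (l : List V) : (l.zip l.tail).map Prod.snd = l.tail :=
  List.map_snd_zip (by cases l <;> simp)

lemma sum_count_eq_countP {α : Type*} [DecidableEq α] (A : Finset α) (P : α → Prop)
    [DecidablePred P] : ∀ (L : List α), (∀ a ∈ L, a ∈ A) →
    ∑ a ∈ A.filter P, L.count a = L.countP (fun a => decide (P a))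
  | [], _ => by simp
  | b :: L, h => by
      have hb : b ∈ A := h b (by simp)
      have ih := sum_count_eq_countP A P L (fun a ha => h a (by simp [ha]))
      simp only [List.count_cons, List.countP_cons, Finset.sum_add_distrib, ih]
      congr 1
      simp only [beq_iff_eq]
      rw [Finset.sum_ite_eq (A.filter P) b (fun _ => 1)]
      simp [Finset.mem_filter, hb]

lemma countP_snd {V : Type*} [DecidableEq V] (p : List V) (v : V) :
    (pathArcs p).countP (fun a => decide (a.2 = v)) = p.tail.count v := by
  rw [List.count, ← map_snd_zip_tail p, List.countP_map]
  rfl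

lemma countP_fst {V : Type*} [DecidableEq V] (p : List V) (v : V) :
    (pathArcs p).countP (fun a => decide (a.1 = v)) = p.dropLast.count v := by
  rw [List.count, ← map_fst_zip_tail p, List.countP_map]
  rfl

/-- If `S` is not a cut-set, some feasible flow vanishing on `S` has positive value, so
the Benders cut generated by `S` is not a valid inequality for the configuration that
closes exactly the arcs of `S`. -/
theorem stmt_3 {V : Type*} [Fintype V] [DecidableEq V] (A : Finset (V × V)) (s t : V)
    (hst : s ≠ t) (Cap : V × V → ℝ) (hCap : ∀ a ∈ A, 0 < Cap a)
    (S : Finset (V × V)) (hSA : S ⊆ A) (hS : ¬ IsCutSet A s t S) :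
    ∃ x : V × V → ℝ, IsFeasibleFlow A s t Cap x ∧ (∀ a ∈ S, x a = 0) ∧
      0 < flowValue A s x ∧
      ¬ (flowValue A s x ≤ ∑ a ∈ S, Cap a * (if a ∈ S then (0 : ℝ) else 1)) := by
  letI : BEq (V × V) := instBEqOfDecidableEq
  letI : LawfulBEq (V × V) := instLawfulBEq
  rw [IsCutSet] at hS
  push_neg at hS
  obtain ⟨p, hpath, hdisj⟩ := hS hSA
  obtain ⟨hhead, hlast, harcs⟩ := hpath
  -- p has at least two elements
  obtain _ | ⟨a, q⟩ := p
  · simp at hhead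
  have ha : s = a := by simpa using hhead.symm
  subst ha
  obtain _ | ⟨b, r⟩ := q
  · simp at hlast; exact absurd hlast hst
  set p : List V := s :: b :: r with hp
  have hpne : p ≠ [] := by simp [hp]
  have hA1 : (s, b) ∈ A := harcs _ (by simp [pathArcs, hp])
  have hAne : A.Nonempty := ⟨_, hA1⟩
  set L : List (V × V) := pathArcs p with hL
  -- last element
  have htl : p.dropLast ++ [t] = p := by
    have h1 := List.dropLast_append_getLast hpne
    have h2 : p.getLast hpne = t := by
      rw [List.getLast?_eq_getLast hpne] at hlast
      exact Option.some.inj hlast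
    rw [h2] at h1; exact h1
  -- counting facts
  have hcount_tail : ∀ v : V, v ≠ s → p.tail.count v = p.count v := by
    intro v hv
    rw [hp]
    simp only [List.count_cons, List.tail_cons]
    simp [hv, Ne.symm hv]
  have hcount_drop : ∀ v : V, v ≠ t → p.dropLast.count v = p.count v := by
    intro v hv
    conv_rhs => rw [← htl]
    simp [List.count_append, List.count_singleton, hv, Ne.symm hv]
  have hcount_s : p.count s = p.tail.count s + 1 := by
    rw [hp]; simp [List.count_cons]
  -- the ε
  set f : V × V → ℝ := fun a => Cap a / (L.count a + 1) with hf
  set ε : ℝ := (A.image f).min' (hAne.image f) with hε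
  have hεle : ∀ a ∈ A, ε ≤ f a := fun a hain =>
    Finset.min'_le _ _ (Finset.mem_image_of_mem f hain)
  have hεpos : 0 < ε := by
    obtain ⟨a, hain, hfa⟩ := Finset.mem_image.mp (Finset.min'_mem (A.image f) (hAne.image f))
    rw [hε, ← hfa, hf]
    have := hCap a hain
    positivity
  -- sum computations
  have hsum_in : ∀ v : V, ∑ a ∈ A.filter (fun a => a.2 = v), ε * (L.count a : ℝ)
      = ε * (p.tail.count v : ℝ) := by
    intro v
    rw [← Finset.mul_sum]
    congr 1
    rw [← Nat.cast_sum]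
    have h := sum_count_eq_countP A (fun a : V × V => a.2 = v) L (fun a h => harcs a h)
    have h2 : List.countP (fun a => decide (a.2 = v)) L = p.tail.count v := by
      rw [hL]; exact countP_snd p v
    exact_mod_cast h.trans h2
  have hsum_out : ∀ v : V, ∑ a ∈ A.filter (fun a => a.1 = v), ε * (L.count a : ℝ)
      = ε * (p.dropLast.count v : ℝ) := by
    intro v
    rw [← Finset.mul_sum]
    congr 1
    rw [← Nat.cast_sum]
    have h := sum_count_eq_countP A (fun a : V × V => a.1 = v) L (fun a h => harcs a h)
    have h2 : List.countP (fun a => decide (a.1 = v)) L = p.dropLast.count v := by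
      rw [hL]; exact countP_fst p v
    exact_mod_cast h.trans h2
  -- value of the flow
  have hval : flowValue A s (fun a => ε * (L.count a : ℝ)) = ε := by
    rw [flowValue, hsum_in s, hsum_out s, hcount_drop s hst, hcount_s]
    push_cast
    ring
  -- the flow
  refine ⟨fun a => ε * (L.count a : ℝ), ⟨?_, ?_⟩, ?_, ?_, ?_⟩
  · -- capacity bounds
    intro a hain
    have h2 : (0:ℝ) ≤ (L.count a : ℝ) := Nat.cast_nonneg _
    constructor
    · show (0:ℝ) ≤ ε * (L.count a : ℝ)
      positivity
    · show ε * (L.count a : ℝ) ≤ Cap a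
      have h1 : ε ≤ Cap a / ((L.count a : ℝ) + 1) := hεle a hain
      have h3 : (0:ℝ) < (L.count a : ℝ) + 1 := by positivity
      rw [le_div_iff₀ h3] at h1
      nlinarith
  · -- conservation
    intro v hvs hvt
    rw [hsum_in v, hsum_out v, hcount_tail v hvs, hcount_drop v hvt]
  · -- vanishes on S
    intro a haS
    have hc : L.count a = 0 := List.count_eq_zero.mpr (hdisj a haS)
    show ε * (L.count a : ℝ) = 0
    rw [hc]; simp
  · -- positive value
    rw [hval]; exact hεpos
  · -- violated Benders cut
    have hz : ∑ a ∈ S, Cap a * (if a ∈ S then (0:ℝ) else 1) = 0 :=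
      Finset.sum_eq_zero (fun a ha => by simp [ha])
    rw [hz, hval]
    exact not_le.mpr hεpos
end

section
/- Suppose the capacity function is integer-valued: Cap a = (n a : ℝ) for some n : A → ℕ. Then there exists a flow x* feasible for Cap such that x* a is a natural number (as a real) for every a ∈ A and value(x*) ≥ value(x) for every flow x feasible for Cap. In particular the maximum flow value is a natural number. -/
open Finset

set_option linter.unusedSectionVars false
set_option linter.unnecessarySimpa false

namespace Stmt10Aux

open Relation List

variable {V : Type*} [Fintype V] [DecidableEq V]


/-- consecutive pairs of a list -/
def steps' : List V → List (V × V)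
  | [] => []
  | [_] => []
  | x :: y :: l => (x, y) :: steps' (y :: l)

lemma mem_steps' : ∀ {l : List V} {e : V × V}, e ∈ steps' l → e.1 ∈ l ∧ e.2 ∈ l.tail
  | [], _, h => by simp [steps'] at h
  | [_], _, h => by simp [steps'] at h
  | x :: y :: l, e, h => by
    rw [steps'] at h
    rcases List.mem_cons.1 h with rfl | h
    · exact ⟨by simp, by simp⟩
    · obtain ⟨h1, h2⟩ := mem_steps' h
      exact ⟨List.mem_cons_of_mem _ h1, List.mem_cons_of_mem _ (by simpa using h2)⟩

/-- the "distinctness" property between two steps' -/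
def Q' (e e' : V × V) : Prop := e.1 ≠ e'.1 ∧ e.1 ≠ e'.2 ∧ e.2 ≠ e'.2

lemma steps'_pairwise : ∀ {l : List V}, l.Nodup → (steps' l).Pairwise Q'
  | [], _ => by simp [steps']
  | [_], _ => by simp [steps']
  | x :: y :: l, h => by
    rw [steps']
    have hx : x ∉ y :: l := (List.nodup_cons.1 h).1
    have hyl : (y :: l).Nodup := (List.nodup_cons.1 h).2
    have hy : y ∉ l := (List.nodup_cons.1 hyl).1
    refine List.Pairwise.cons ?_ (steps'_pairwise hyl)
    intro e' he'
    obtain ⟨h1, h2⟩ := mem_steps' he'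
    have h2' : e'.2 ∈ l := by simpa using h2
    exact ⟨fun hh => hx (by rw [show x = e'.1 from hh]; exact h1),
      fun hh => hx (by rw [show x = e'.2 from hh]; exact List.mem_cons_of_mem _ h2'),
      fun hh => hy (by rw [show y = e'.2 from hh]; exact h2')⟩

lemma steps'_rel {r : V → V → Prop} :
    ∀ {x : V} {l : List V}, List.Chain r x l → ∀ e ∈ steps' (x :: l), r e.1 e.2
  | _, [], _, e, he => by simp [steps'] at he
  | x, y :: l, h, e, he => by
    rw [steps'] at he
    rcases List.mem_cons.1 he with rfl | he
    · exact (List.chain_cons.1 h).1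
    · exact steps'_rel (List.chain_cons.1 h).2 e he

lemma chain_dedup {r : V → V → Prop} :
    ∀ (N : ℕ) (a : V) (l : List V), l.length ≤ N → List.Chain r a l →
    ∃ l', List.Chain r a l' ∧ (a :: l').Nodup ∧
      (a :: l').getLast (List.cons_ne_nil _ _) = (a :: l).getLast (List.cons_ne_nil _ _) ∧
      l' <+ l := by
  intro N
  induction N with
  | zero =>
    intro a l hlen _
    have : l = [] := List.eq_nil_of_length_eq_zero (Nat.le_zero.1 hlen)
    subst this
    exact ⟨[], List.Chain.nil, by simp, rfl, List.Sublist.refl _⟩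
  | succ m ih =>
    intro a l hlen hch
    by_cases hmem : a ∈ l
    · obtain ⟨l1, l2, rfl⟩ := List.append_of_mem hmem
      have hch2 : List.Chain r a l2 := (List.isChain_cons_split.1 hch).2
      have hlen2 : l2.length ≤ m := by
        have h5 : (l1 ++ a :: l2).length = l1.length + (l2.length + 1) := by simp
        omega
      obtain ⟨l', h1, h2, h3, h4⟩ := ih a l2 hlen2 hch2
      refine ⟨l', h1, h2, ?_, h4.trans ((List.sublist_cons_self a l2).trans
        (List.sublist_append_right l1 (a :: l2)))⟩
      rw [h3]
      have : a :: (l1 ++ a :: l2) = (a :: l1) ++ (a :: l2) := by simp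
      rw [List.getLast_congr _ (by simp) this, List.getLast_append_of_ne_nil (by simp) (List.cons_ne_nil _ _)]
    · cases l with
      | nil => exact ⟨[], List.Chain.nil, by simp, rfl, List.Sublist.refl _⟩
      | cons x l' =>
        have hrax : r a x := (List.chain_cons.1 hch).1
        have hch' : List.Chain r x l' := (List.chain_cons.1 hch).2
        have hlen' : l'.length ≤ m := by simp at hlen; omega
        obtain ⟨l'', h1, h2, h3, h4⟩ := ih x l' hlen' hch'
        have hsub : x :: l'' <+ x :: l' := List.Sublist.cons₂ _ h4
        refine ⟨x :: l'', List.chain_cons.2 ⟨hrax, h1⟩, ?_, ?_, hsub⟩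
        · rw [List.nodup_cons]
          exact ⟨fun hc => hmem (hsub.subset hc), h2⟩
        · rw [List.getLast_cons_cons, List.getLast_cons_cons]
          exact h3



def inZ (A : Finset (V × V)) (x : V × V → ℤ) (v : V) : ℤ :=
  ∑ a ∈ A.filter (fun a => a.2 = v), x a

def outZ (A : Finset (V × V)) (x : V × V → ℤ) (v : V) : ℤ :=
  ∑ a ∈ A.filter (fun a => a.1 = v), x a

def excZ (A : Finset (V × V)) (x : V × V → ℤ) (v : V) : ℤ := inZ A x v - outZ A x v

def valZ (A : Finset (V × V)) (s : V) (x : V × V → ℤ) : ℤ := outZ A x s - inZ A x s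

lemma valZ_eq_neg_excZ (A : Finset (V × V)) (s : V) (x : V × V → ℤ) :
    valZ A s x = -excZ A x s := by
  simp [valZ, excZ]

lemma excZ_add (A : Finset (V × V)) (x y : V × V → ℤ) (v : V) :
    excZ A (fun a => x a + y a) v = excZ A x v + excZ A y v := by
  simp [excZ, inZ, outZ, Finset.sum_add_distrib]; ring

/-- residual relation -/
def Rres (A : Finset (V × V)) (n f : V × V → ℕ) (u v : V) : Prop :=
  ((u, v) ∈ A ∧ f (u, v) < n (u, v)) ∨ ((v, u) ∈ A ∧ 0 < f (v, u))

def dstep (A : Finset (V × V)) (n f : V × V → ℕ) (e : V × V) : V × V → ℤ :=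
  fun a => if e ∈ A ∧ f e < n e then (if a = e then 1 else 0)
    else (if a = (e.2, e.1) then -1 else 0)

def ua (A : Finset (V × V)) (n f : V × V → ℕ) (e : V × V) : V × V :=
  if e ∈ A ∧ f e < n e then e else (e.2, e.1)

lemma Rres_cases {A : Finset (V × V)} {n f : V × V → ℕ} {e : V × V}
    (he : Rres A n f e.1 e.2) (h1 : ¬(e ∈ A ∧ f e < n e)) :
    (e.2, e.1) ∈ A ∧ 0 < f (e.2, e.1) := by
  rcases he with h | h
  · exact absurd (show e ∈ A ∧ f e < n e by simpa using h) h1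
  · exact h

lemma dstep_eq_zero {A : Finset (V × V)} {n f : V × V → ℕ} {e a : V × V}
    (h : a ≠ ua A n f e) : dstep A n f e a = 0 := by
  by_cases h1 : e ∈ A ∧ f e < n e <;> simp [dstep, ua, h1] at h ⊢ <;> simp [h]

lemma ua_mem {A : Finset (V × V)} {n f : V × V → ℕ} {e : V × V}
    (he : Rres A n f e.1 e.2) : ua A n f e ∈ A := by
  by_cases h1 : e ∈ A ∧ f e < n e
  · simpa [ua, h1] using h1.1
  · simp [ua, h1]; exact (Rres_cases he h1).1

lemma dstep_ua {A : Finset (V × V)} {n f : V × V → ℕ} {e : V × V}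
    (he : Rres A n f e.1 e.2) :
    (dstep A n f e (ua A n f e) = 1 ∧ f (ua A n f e) < n (ua A n f e)) ∨
    (dstep A n f e (ua A n f e) = -1 ∧ 0 < f (ua A n f e)) := by
  by_cases h1 : e ∈ A ∧ f e < n e
  · exact Or.inl ⟨by simp [dstep, ua, h1], by simpa [ua, h1] using h1.2⟩
  · exact Or.inr ⟨by simp [dstep, ua, h1], by simp [ua, h1]; exact (Rres_cases he h1).2⟩

lemma ua_ne {A : Finset (V × V)} {n f : V × V → ℕ} {e e' : V × V}
    (hq : Q' e e') : ua A n f e ≠ ua A n f e' := by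
  obtain ⟨q1, q2, q3⟩ := hq
  unfold ua
  split_ifs <;> intro h <;>
    first
      | exact q1 (congrArg Prod.fst h)
      | exact q2 (congrArg Prod.fst h)
      | exact q2 (congrArg Prod.snd h)
      | exact q3 (congrArg Prod.fst h)

def gfun (A : Finset (V × V)) (n f : V × V → ℕ) (S : List (V × V)) : V × V → ℤ :=
  fun a => (S.map (fun e => dstep A n f e a)).sum

lemma gfun_nil (A : Finset (V × V)) (n f : V × V → ℕ) (a : V × V) :
    gfun A n f [] a = 0 := rfl

lemma gfun_cons (A : Finset (V × V)) (n f : V × V → ℕ) (e : V × V) (S : List (V × V))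
    (a : V × V) : gfun A n f (e :: S) a = dstep A n f e a + gfun A n f S a := by
  simp [gfun]

lemma excZ_dstep {A : Finset (V × V)} {n f : V × V → ℕ} {e : V × V}
    (he : Rres A n f e.1 e.2) (v : V) :
    excZ A (dstep A n f e) v = (if e.2 = v then 1 else 0) - (if e.1 = v then 1 else 0) := by
  unfold excZ inZ outZ
  by_cases h1 : e ∈ A ∧ f e < n e
  · simp only [dstep, if_pos h1]
    rw [Finset.sum_ite_eq' (A.filter (fun a => a.2 = v)) e (fun _ => (1:ℤ)),
      Finset.sum_ite_eq' (A.filter (fun a => a.1 = v)) e (fun _ => (1:ℤ))]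
    simp [Finset.mem_filter, h1.1]
  · have hb := Rres_cases he h1
    simp only [dstep, if_neg h1]
    rw [Finset.sum_ite_eq' (A.filter (fun a => a.2 = v)) (e.2, e.1) (fun _ => (-1:ℤ)),
      Finset.sum_ite_eq' (A.filter (fun a => a.1 = v)) (e.2, e.1) (fun _ => (-1:ℤ))]
    simp only [Finset.mem_filter, hb.1, true_and]
    by_cases h2 : e.2 = v <;> by_cases h3 : e.1 = v <;> simp [h2, h3]

lemma excZ_gfun_zero (A : Finset (V × V)) (n f : V × V → ℕ) (v : V) :
    excZ A (gfun A n f []) v = 0 := by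
  simp [excZ, inZ, outZ, gfun]

lemma excZ_gfun_chain (A : Finset (V × V)) (n f : V × V → ℕ) :
    ∀ (x : V) (l : List V), List.Chain (Rres A n f) x l → ∀ v,
      excZ A (gfun A n f (steps' (x :: l))) v =
        (if (x :: l).getLast (List.cons_ne_nil _ _) = v then 1 else 0) -
          (if x = v then 1 else 0) := by
  intro x l
  induction l generalizing x with
  | nil => intro _ v; rw [show [x].getLast (List.cons_ne_nil _ _) = x from rfl]; simp [steps', excZ, inZ, outZ, gfun]
  | cons y l ih =>
    intro hch v
    have h1 : Rres A n f x y := (List.chain_cons.1 hch).1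
    have h2 : List.Chain (Rres A n f) y l := (List.chain_cons.1 hch).2
    have : steps' (x :: y :: l) = (x, y) :: steps' (y :: l) := rfl
    rw [this]
    have hadd : gfun A n f ((x, y) :: steps' (y :: l)) =
        fun a => dstep A n f (x, y) a + gfun A n f (steps' (y :: l)) a := by
      funext a; exact gfun_cons A n f _ _ a
    rw [hadd, excZ_add, excZ_dstep h1 v, ih y h2 v, List.getLast_cons_cons]
    ring

lemma gfun_trichotomy (A : Finset (V × V)) (n f : V × V → ℕ) :
    ∀ (S : List (V × V)), (∀ e ∈ S, Rres A n f e.1 e.2) → S.Pairwise Q' → ∀ a,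
      gfun A n f S a = 0 ∨
      (gfun A n f S a = 1 ∧ a ∈ A ∧ f a < n a) ∨
      (gfun A n f S a = -1 ∧ a ∈ A ∧ 0 < f a) := by
  intro S
  induction S with
  | nil => intro _ _ a; exact Or.inl rfl
  | cons e S ih =>
    intro hrel hpw a
    have hrele : Rres A n f e.1 e.2 := hrel e List.mem_cons_self
    have hrelS : ∀ e' ∈ S, Rres A n f e'.1 e'.2 := fun e' he' =>
      hrel e' (List.mem_cons_of_mem _ he')
    have hpwS : S.Pairwise Q' := (List.pairwise_cons.1 hpw).2
    have hhead : ∀ e' ∈ S, Q' e e' := (List.pairwise_cons.1 hpw).1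
    rw [gfun_cons]
    by_cases ha : a = ua A n f e
    · have hS0 : gfun A n f S a = 0 := by
        apply List.sum_eq_zero
        intro z hz
        obtain ⟨e', he', rfl⟩ := List.mem_map.1 hz
        apply dstep_eq_zero
        rw [ha]
        exact ua_ne (hhead e' he')
      rw [hS0, add_zero, ha]
      rcases dstep_ua hrele with ⟨h1, h2⟩ | ⟨h1, h2⟩
      · exact Or.inr (Or.inl ⟨h1, ua_mem hrele, h2⟩)
      · exact Or.inr (Or.inr ⟨h1, ua_mem hrele, h2⟩)
    · rw [dstep_eq_zero ha, zero_add]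
      exact ih hrelS hpwS a

def IntFeas (A : Finset (V × V)) (s t : V) (n : V × V → ℕ) (f : V × V → ℕ) : Prop :=
  (∀ a ∈ A, f a ≤ n a) ∧ (∀ a ∉ A, f a = 0) ∧
  ∀ v : V, v ≠ s → v ≠ t → excZ A (fun a => (f a : ℤ)) v = 0

lemma augment (A : Finset (V × V)) (s t : V) (n : V × V → ℕ) (hst : s ≠ t)
    (f : V × V → ℕ) (hf : IntFeas A s t n f)
    (hreach : Relation.ReflTransGen (Rres A n f) s t) :
    ∃ f', IntFeas A s t n f' ∧
      valZ A s (fun a => (f' a : ℤ)) = valZ A s (fun a => (f a : ℤ)) + 1 := by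
  obtain ⟨l0, hch0, hlast0⟩ := List.exists_isChain_cons_of_relationReflTransGen hreach
  obtain ⟨l, hch, hnd, hlast, -⟩ := chain_dedup l0.length s l0 le_rfl hch0
  have hlt : (s :: l).getLast (List.cons_ne_nil _ _) = t := hlast.trans hlast0
  set S := steps' (s :: l) with hS
  have hrelS : ∀ e ∈ S, Rres A n f e.1 e.2 := steps'_rel hch
  have hpw : S.Pairwise Q' := steps'_pairwise hnd
  have tri := gfun_trichotomy A n f S hrelS hpw
  have hexc : ∀ v, excZ A (gfun A n f S) v =
      (if t = v then 1 else 0) - (if s = v then 1 else 0) := by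
    intro v
    rw [hS, excZ_gfun_chain A n f s l hch v, hlt]
  have hcast : ∀ a, ((((f a : ℤ) + gfun A n f S a).toNat : ℤ)) = (f a : ℤ) + gfun A n f S a := by
    intro a
    rcases tri a with h | ⟨h, _, _⟩ | ⟨h, _, h3⟩ <;> rw [h] <;> omega
  have hfun : (fun a => ((((f a : ℤ) + gfun A n f S a).toNat : ℕ) : ℤ)) =
      fun a => (f a : ℤ) + gfun A n f S a := funext hcast
  refine ⟨fun a => ((f a : ℤ) + gfun A n f S a).toNat, ⟨?_, ?_, ?_⟩, ?_⟩
  · intro a ha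
    have hb := hf.1 a ha
    show ((f a : ℤ) + gfun A n f S a).toNat ≤ n a
    rcases tri a with h | ⟨h, _, h2⟩ | ⟨h, _, _⟩ <;> omega
  · intro a ha
    have h0 : f a = 0 := hf.2.1 a ha
    have hg0 : gfun A n f S a = 0 := by
      rcases tri a with h | ⟨_, h2, _⟩ | ⟨_, h2, _⟩
      · exact h
      · exact absurd h2 ha
      · exact absurd h2 ha
    show ((f a : ℤ) + gfun A n f S a).toNat = 0
    rw [h0, hg0]
    simp
  · intro v hv1 hv2
    rw [hfun, excZ_add, hf.2.2 v hv1 hv2, hexc v, if_neg (fun h => hv2 h.symm),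
      if_neg (fun h => hv1 h.symm)]
    ring
  · rw [valZ_eq_neg_excZ, valZ_eq_neg_excZ, hfun, excZ_add, hexc s,
      if_neg (fun h => hst h.symm), if_pos rfl]
    ring

lemma cut_value (A : Finset (V × V)) (s t : V) (Sf : Finset V) (hs : s ∈ Sf) (ht : t ∉ Sf)
    (y : V × V → ℝ)
    (hcons : ∀ v : V, v ≠ s → v ≠ t →
      ∑ a ∈ A.filter (fun a => a.2 = v), y a = ∑ a ∈ A.filter (fun a => a.1 = v), y a) :
    flowValue A s y = ∑ a ∈ A.filter (fun a => a.1 ∈ Sf ∧ a.2 ∉ Sf), y a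
      - ∑ a ∈ A.filter (fun a => a.2 ∈ Sf ∧ a.1 ∉ Sf), y a := by
  have h1 : ∑ v ∈ Sf, ((∑ a ∈ A.filter (fun a => a.1 = v), y a)
      - (∑ a ∈ A.filter (fun a => a.2 = v), y a)) = flowValue A s y := by
    rw [Finset.sum_eq_single_of_mem s hs]
    · rfl
    · intro v hv hvs
      have hvt : v ≠ t := fun h => ht (h ▸ hv)
      rw [hcons v hvs hvt]
      ring
  have hout : ∑ v ∈ Sf, (∑ a ∈ A.filter (fun a => a.1 = v), y a)
      = ∑ a ∈ A.filter (fun a => a.1 ∈ Sf), y a := by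
    rw [← Finset.sum_fiberwise_of_maps_to (g := fun a : V × V => a.1) (t := Sf)
      (fun a ha => (Finset.mem_filter.1 ha).2) y]
    apply Finset.sum_congr rfl
    intro v hv
    rw [Finset.filter_filter]
    apply Finset.sum_congr _ (fun _ _ => rfl)
    apply Finset.filter_congr
    intro a _
    constructor
    · intro h; exact ⟨show _ ∈ Sf by beta_reduce; rw [h]; exact hv, h⟩
    · rintro ⟨_, h⟩; exact h
  have hin : ∑ v ∈ Sf, (∑ a ∈ A.filter (fun a => a.2 = v), y a)
      = ∑ a ∈ A.filter (fun a => a.2 ∈ Sf), y a := by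
    rw [← Finset.sum_fiberwise_of_maps_to (g := fun a : V × V => a.2) (t := Sf)
      (fun a ha => (Finset.mem_filter.1 ha).2) y]
    apply Finset.sum_congr rfl
    intro v hv
    rw [Finset.filter_filter]
    apply Finset.sum_congr _ (fun _ _ => rfl)
    apply Finset.filter_congr
    intro a _
    constructor
    · intro h; exact ⟨show _ ∈ Sf by beta_reduce; rw [h]; exact hv, h⟩
    · rintro ⟨_, h⟩; exact h
  have hsplit1 : ∑ a ∈ A.filter (fun a => a.1 ∈ Sf), y a =
      ∑ a ∈ A.filter (fun a => a.1 ∈ Sf ∧ a.2 ∈ Sf), y a +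
      ∑ a ∈ A.filter (fun a => a.1 ∈ Sf ∧ a.2 ∉ Sf), y a := by
    rw [← Finset.sum_filter_add_sum_filter_not (A.filter (fun a => a.1 ∈ Sf))
      (fun a => a.2 ∈ Sf) y, Finset.filter_filter, Finset.filter_filter]
  have hsplit2 : ∑ a ∈ A.filter (fun a => a.2 ∈ Sf), y a =
      ∑ a ∈ A.filter (fun a => a.2 ∈ Sf ∧ a.1 ∈ Sf), y a +
      ∑ a ∈ A.filter (fun a => a.2 ∈ Sf ∧ a.1 ∉ Sf), y a := by
    rw [← Finset.sum_filter_add_sum_filter_not (A.filter (fun a => a.2 ∈ Sf))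
      (fun a => a.1 ∈ Sf) y, Finset.filter_filter, Finset.filter_filter]
  have hboth : ∑ a ∈ A.filter (fun a => a.1 ∈ Sf ∧ a.2 ∈ Sf), y a =
      ∑ a ∈ A.filter (fun a => a.2 ∈ Sf ∧ a.1 ∈ Sf), y a := by
    apply Finset.sum_congr _ (fun _ _ => rfl)
    apply Finset.filter_congr
    intro a _
    exact and_comm
  rw [← h1, Finset.sum_sub_distrib, hout, hin, hsplit1, hsplit2, hboth]
  ring

end Stmt10Aux


/-- If the capacities are integer-valued, there is an integer-valued maximum flow, and the
maximum flow value is a natural number. -/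
theorem stmt_10 {V : Type*} [Fintype V] [DecidableEq V] (A : Finset (V × V)) (s t : V)
    (hst : s ≠ t) (Cap : V × V → ℝ) (n : V × V → ℕ) (hCap : ∀ a, Cap a = (n a : ℝ)) :
    ∃ xstar : V × V → ℝ, IsFeasibleFlow A s t Cap xstar ∧
      (∀ a ∈ A, ∃ m : ℕ, xstar a = (m : ℝ)) ∧
      (∀ x : V × V → ℝ, IsFeasibleFlow A s t Cap x →
        flowValue A s x ≤ flowValue A s xstar) ∧
      ∃ m : ℕ, flowValue A s xstar = (m : ℝ) := by
  classical
  have hfin : {f : V × V → ℕ | Stmt10Aux.IntFeas A s t n f}.Finite := by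
    apply Set.Finite.subset (Set.finite_Iic n)
    intro f hf a
    by_cases ha : a ∈ A
    · exact hf.1 a ha
    · rw [hf.2.1 a ha]; exact Nat.zero_le _
  have hzero : Stmt10Aux.IntFeas A s t n (fun _ => 0) := by
    refine ⟨fun a _ => Nat.zero_le _, fun _ _ => rfl, fun v _ _ => ?_⟩
    simp [Stmt10Aux.excZ, Stmt10Aux.inZ, Stmt10Aux.outZ]
  obtain ⟨f, hfF, hmax⟩ := Set.exists_max_image {f : V × V → ℕ | Stmt10Aux.IntFeas A s t n f}
    (fun f : V × V → ℕ => Stmt10Aux.valZ A s (fun a => (f a : ℤ))) hfin ⟨_, hzero⟩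
  simp only [Set.mem_setOf_eq] at hfF hmax
  have ht : ¬ Relation.ReflTransGen (Stmt10Aux.Rres A n f) s t := by
    intro h
    obtain ⟨f', hf', hv⟩ := Stmt10Aux.augment A s t n hst f hfF h
    have := hmax f' hf'
    omega
  set Sf : Finset V :=
    Finset.univ.filter (fun v => Relation.ReflTransGen (Stmt10Aux.Rres A n f) s v) with hSf
  have hmemSf : ∀ v, v ∈ Sf ↔ Relation.ReflTransGen (Stmt10Aux.Rres A n f) s v := by
    intro v; simp [hSf]
  have hs : s ∈ Sf := (hmemSf s).2 Relation.ReflTransGen.refl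
  have htS : t ∉ Sf := fun h => ht ((hmemSf t).1 h)
  have hsat : ∀ a ∈ A, a.1 ∈ Sf → a.2 ∉ Sf → f a = n a := by
    intro a ha h1 h2
    by_contra hne
    have hr : Stmt10Aux.Rres A n f a.1 a.2 :=
      Or.inl ⟨by rwa [Prod.mk.eta], by rw [Prod.mk.eta]; exact lt_of_le_of_ne (hfF.1 a ha) hne⟩
    exact h2 ((hmemSf _).2 (((hmemSf _).1 h1).tail hr))
  have hzero2 : ∀ a ∈ A, a.2 ∈ Sf → a.1 ∉ Sf → f a = 0 := by
    intro a ha h1 h2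
    by_contra hne
    have hr : Stmt10Aux.Rres A n f a.2 a.1 :=
      Or.inr ⟨by rwa [Prod.mk.eta], by rw [Prod.mk.eta]; exact Nat.pos_of_ne_zero hne⟩
    exact h2 ((hmemSf _).2 (((hmemSf _).1 h1).tail hr))
  set xstar : V × V → ℝ := fun a => ((f a : ℕ) : ℝ) with hx
  have hxcons : ∀ v : V, v ≠ s → v ≠ t →
      ∑ a ∈ A.filter (fun a => a.2 = v), xstar a =
      ∑ a ∈ A.filter (fun a => a.1 = v), xstar a := by
    intro v hv1 hv2
    have h := hfF.2.2 v hv1 hv2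
    simp only [Stmt10Aux.excZ, Stmt10Aux.inZ, Stmt10Aux.outZ, sub_eq_zero] at h
    have h' : (∑ a ∈ A.filter (fun a => a.2 = v), f a) =
        ∑ a ∈ A.filter (fun a => a.1 = v), f a := by exact_mod_cast h
    rw [hx]
    beta_reduce
    exact_mod_cast h'
  have hfeas : IsFeasibleFlow A s t Cap xstar := by
    constructor
    · intro a ha
      refine ⟨Nat.cast_nonneg _, ?_⟩
      rw [hCap, hx]
      simp only []
      exact_mod_cast hfF.1 a ha
    · exact hxcons
  have key := Stmt10Aux.cut_value A s t Sf hs htS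
  have hxval : flowValue A s xstar =
      ∑ a ∈ A.filter (fun a => a.1 ∈ Sf ∧ a.2 ∉ Sf), ((n a : ℕ) : ℝ) := by
    rw [key xstar hxcons]
    have hz : ∑ a ∈ A.filter (fun a => a.2 ∈ Sf ∧ a.1 ∉ Sf), xstar a = 0 := by
      apply Finset.sum_eq_zero
      intro a ha
      obtain ⟨haA, h1, h2⟩ := Finset.mem_filter.1 ha
      rw [hx]
      simp [hzero2 a haA h1 h2]
    rw [hz, sub_zero]
    apply Finset.sum_congr rfl
    intro a ha
    obtain ⟨haA, h1, h2⟩ := Finset.mem_filter.1 ha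
    rw [hx]
    norm_num [hsat a haA h1 h2]
  refine ⟨xstar, hfeas, fun a _ => ⟨f a, rfl⟩, ?_, ?_⟩
  · intro x hxf
    rw [key x hxf.2, hxval]
    have hle : ∑ a ∈ A.filter (fun a => a.1 ∈ Sf ∧ a.2 ∉ Sf), x a ≤
        ∑ a ∈ A.filter (fun a => a.1 ∈ Sf ∧ a.2 ∉ Sf), ((n a : ℕ) : ℝ) := by
      apply Finset.sum_le_sum
      intro a ha
      have h := (hxf.1 a (Finset.mem_filter.1 ha).1).2
      rwa [hCap] at h
    have hnn : 0 ≤ ∑ a ∈ A.filter (fun a => a.2 ∈ Sf ∧ a.1 ∉ Sf), x a :=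
      Finset.sum_nonneg fun a ha => (hxf.1 a (Finset.mem_filter.1 ha).1).1
    linarith
  · have hvc : flowValue A s xstar = ((Stmt10Aux.valZ A s (fun a => (f a : ℤ)) : ℤ) : ℝ) := by
      simp only [flowValue, hx, Stmt10Aux.valZ, Stmt10Aux.outZ, Stmt10Aux.inZ]
      push_cast
      ring
    have hv0 : 0 ≤ Stmt10Aux.valZ A s (fun a => (f a : ℤ)) := by
      have h := hmax (fun _ => 0) hzero
      simpa [Stmt10Aux.valZ, Stmt10Aux.outZ, Stmt10Aux.inZ] using h
    exact ⟨(Stmt10Aux.valZ A s (fun a => (f a : ℤ))).toNat, by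
      rw [hvc]; exact_mod_cast (Int.toNat_of_nonneg hv0).symm⟩
end
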